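/- With the double Dx = x ⊕ x̄^∗ in the Drinfeld center Z(C) and the morphism φ : 1 → Dx ⊗ Dx defined below, one has c_{Dx}(Dx) ∘ φ = −φ, where c_{Dx}(Dx) : Dx ⊗ Dx → Dx ⊗ Dx denotes the half-braiding of Dx ∈ Z(C) evaluated at the underlying object Dx (equivalently, the braiding of Z(C) on Dx). -/

import Mathlib

/-!
Statement 10: For the double `Dx = x ⊕ x̄^∗` in the Drinfeld center `Z(C)` of a braided
category `C` and the canonical morphism `φ : 𝟙 → Dx ⊗ Dx`, one has `c_{Dx}(Dx) ∘ φ = −φ`.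
-/

open CategoryTheory MonoidalCategory

universe v u

variable {k : Type*} [Field k]
variable {C : Type u} [Category.{v} C] [MonoidalCategory C] [BraidedCategory C]
  [Preadditive C] [CategoryTheory.Linear k C] [MonoidalPreadditive C] [MonoidalLinear k C]

/-- Let `x` be an object of a braided category `C` with a right dual `xS = x^∗` (with evaluation
`ev`, coevaluation `coev` satisfying the triangle identities), and let `Dx ∈ Z(C)` be the double
of `x`: the biproduct `x ⊕ x̄^∗` (with inclusions `ι₁, ι₂` and projections `p₁, p₂`), whose
half-braiding restricts on the summand `x` to the braiding of `C` and on the summand `x^∗` to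
the inverse braiding.  Let `φ : 𝟙_C ⟶ Dx ⊗ Dx` be the morphism whose component into `x ⊗ x^∗`
is `coev`, whose component into `x^∗ ⊗ x` is `−c_{x,x^∗} ∘ coev`, and whose components into
`x ⊗ x` and `x^∗ ⊗ x^∗` vanish, i.e.
`φ = coev ≫ (ι₁ ⊗ ι₂) − coev ≫ c_{x,x^∗} ≫ (ι₂ ⊗ ι₁)`.
Then `φ ≫ c_{Dx}(Dx) = −φ`. -/
theorem double_phi_antisymmetric
    {x xS : C} (ev : xS ⊗ x ⟶ 𝟙_ C) (coev : 𝟙_ C ⟶ x ⊗ xS)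
    (zig : (coev ▷ x) ≫ (α_ x xS x).hom ≫ (x ◁ ev) = (λ_ x).hom ≫ (ρ_ x).inv)
    (zag : (xS ◁ coev) ≫ (α_ xS x xS).inv ≫ (ev ▷ xS) = (ρ_ xS).hom ≫ (λ_ xS).inv)
    (Dx : CategoryTheory.Center C)
    (ι₁ : x ⟶ Dx.1) (ι₂ : xS ⟶ Dx.1) (p₁ : Dx.1 ⟶ x) (p₂ : Dx.1 ⟶ xS)
    (hι₁p₁ : ι₁ ≫ p₁ = 𝟙 x) (hι₂p₂ : ι₂ ≫ p₂ = 𝟙 xS)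
    (hι₁p₂ : ι₁ ≫ p₂ = 0) (hι₂p₁ : ι₂ ≫ p₁ = 0)
    (htotal : p₁ ≫ ι₁ + p₂ ≫ ι₂ = 𝟙 Dx.1)
    -- the half-braiding of `Dx` acts on the summand `x` by the braiding of `C`
    (hβ₁ : ∀ m : C, (ι₁ ▷ m) ≫ (Dx.2.β m).hom = (β_ x m).hom ≫ (m ◁ ι₁))
    -- and on the summand `x^∗` by the inverse braiding
    (hβ₂ : ∀ m : C, (ι₂ ▷ m) ≫ (Dx.2.β m).hom = (β_ m xS).inv ≫ (m ◁ ι₂)) :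
    (coev ≫ (ι₁ ⊗ₘ ι₂) - coev ≫ (β_ x xS).hom ≫ (ι₂ ⊗ₘ ι₁)) ≫ (Dx.2.β Dx.1).hom
      = -(coev ≫ (ι₁ ⊗ₘ ι₂) - coev ≫ (β_ x xS).hom ≫ (ι₂ ⊗ₘ ι₁)) := by
  have h1 : (ι₁ ⊗ₘ ι₂) ≫ (Dx.2.β Dx.1).hom = (β_ x xS).hom ≫ (ι₂ ⊗ₘ ι₁) := by
    rw [tensorHom_def' ι₁ ι₂, Category.assoc, hβ₁,
      BraidedCategory.braiding_naturality_right_assoc, tensorHom_def ι₂ ι₁]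
  have h2 : (ι₂ ⊗ₘ ι₁) ≫ (Dx.2.β Dx.1).hom = (β_ x xS).inv ≫ (ι₁ ⊗ₘ ι₂) := by
    rw [tensorHom_def' ι₂ ι₁, Category.assoc, hβ₂,
      BraidedCategory.braiding_inv_naturality_right_assoc, tensorHom_def ι₁ ι₂]
  rw [Preadditive.sub_comp, Category.assoc, h1, Category.assoc, Category.assoc, h2,
    Iso.hom_inv_id_assoc]
  abel
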